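/- arXiv:2208.00412 — 5 statements merged into one kernel-verified Lean document; each statement's English description precedes it below -/
import Mathlib

section
/- The partition function P is well-defined and produces a partition of ℝ≥0: given clock valuations 0 = μ₀ < μ₁ < ⋯ < μₙ with distinct integer floors among the non-integer values, the intervals g₀,…,gₙ defined by the four cases of P are pairwise disjoint, their union is ℝ≥0, and μᵢ ∈ gᵢ for each 0 ≤ i ≤ n. -/
/-- A real number is an integer clock value (a natural number). -/
def IsIntVal (x : ℝ) : Prop := ∃ m : ℕ, x = m

open Classical in
/-- The partition function `P` of the paper: given clock valuations
`μ₀ < μ₁ < ⋯ < μₙ` (with `μₙ₊₁ = ∞`), it returns the intervals `g₀,…,gₙ`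
defined by the four cases distinguishing whether each `μᵢ`, `μᵢ₊₁` is an
integer or not. -/
noncomputable def Pfun (n : ℕ) (μ : Fin (n + 1) → ℝ) : Fin (n + 1) → Set ℝ := fun i =>
  if h : (i : ℕ) < n then
    let a := μ i
    let b := μ ⟨(i : ℕ) + 1, by omega⟩
    if IsIntVal a then
      if IsIntVal b then Set.Ico a b else Set.Icc a ((⌊b⌋ : ℤ) : ℝ)
    else
      if IsIntVal b then Set.Ioo ((⌊a⌋ : ℤ) : ℝ) b
      else Set.Ioc ((⌊a⌋ : ℤ) : ℝ) ((⌊b⌋ : ℤ) : ℝ)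
  else
    if IsIntVal (μ i) then Set.Ici (μ i) else Set.Ioi ((⌊μ i⌋ : ℤ) : ℝ)

namespace PfunAux

open Classical

def A (n : ℕ) (μ : Fin (n + 1) → ℝ) (i : Fin (n + 1)) (x : ℝ) : Prop :=
  if IsIntVal (μ i) then μ i ≤ x else ((⌊μ i⌋ : ℤ) : ℝ) < x

variable {n : ℕ} {μ : Fin (n + 1) → ℝ}

lemma mem_pfun_lt (i : Fin (n + 1)) (hi : (i : ℕ) < n) (x : ℝ) :
    x ∈ Pfun n μ i ↔ A n μ i x ∧ ¬ A n μ ⟨(i : ℕ) + 1, by omega⟩ x := by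
  unfold Pfun A
  rw [dif_pos hi]
  by_cases ha : IsIntVal (μ i) <;>
    by_cases hb : IsIntVal (μ ⟨(i : ℕ) + 1, by omega⟩) <;>
    simp [ha, hb, not_le, not_lt, and_comm]

lemma mem_pfun_last (i : Fin (n + 1)) (hi : ¬ (i : ℕ) < n) (x : ℝ) :
    x ∈ Pfun n μ i ↔ A n μ i x := by
  unfold Pfun A
  rw [dif_neg hi]
  by_cases ha : IsIntVal (μ i) <;> simp [ha]

lemma Astep (hmono : StrictMono μ) (i : Fin (n + 1)) (hi : (i : ℕ) < n) (x : ℝ)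
    (h : A n μ ⟨(i : ℕ) + 1, by omega⟩ x) : A n μ i x := by
  set j : Fin (n + 1) := ⟨(i : ℕ) + 1, by omega⟩ with hj
  have hab : μ i < μ j := hmono (by simp [hj, Fin.lt_def])
  unfold A at h ⊢
  by_cases ha : IsIntVal (μ i) <;> by_cases hb : IsIntVal (μ j) <;>
      simp only [ha, hb, if_true, if_false, ite_true, ite_false] at h ⊢
  · linarith
  · obtain ⟨m, hm⟩ := ha
    have : (m : ℤ) ≤ ⌊μ j⌋ := by
      rw [Int.le_floor]; push_cast; linarith
    refine le_of_lt ?_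
    calc μ i = ((m : ℤ) : ℝ) := by push_cast; linarith
      _ ≤ ((⌊μ j⌋ : ℤ) : ℝ) := by exact_mod_cast this
      _ < x := h
  · have := Int.floor_le (μ i); linarith
  · have : (⌊μ i⌋ : ℝ) ≤ (⌊μ j⌋ : ℝ) := by
      exact_mod_cast Int.floor_le_floor hab.le
    linarith

lemma Amono (hmono : StrictMono μ) (x : ℝ) :
    ∀ j i : Fin (n + 1), i ≤ j → A n μ j x → A n μ i x := by
  intro j
  induction j using Fin.induction with
  | zero =>
      intro i hij h
      have : i = 0 := le_antisymm hij (Fin.zero_le i)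
      rwa [this]
  | succ j ih =>
      intro i hij h
      rcases eq_or_lt_of_le hij with rfl | hlt
      · exact h
      · have hcast : (j.castSucc : ℕ) < n := by simp
        have hsucc : (⟨(j.castSucc : ℕ) + 1, by omega⟩ : Fin (n + 1)) = j.succ := by
          apply Fin.ext; simp
        have h1 : A n μ j.castSucc x := Astep hmono j.castSucc hcast x (by rwa [hsucc])
        exact ih i (by rw [Fin.le_def]; rw [Fin.lt_def] at hlt; simp at hlt ⊢; omega) h1

end PfunAux

open PfunAux

/-- The partition function is well-defined and produces a partition of `ℝ≥0`:
the intervals `g₀,…,gₙ` are pairwise disjoint, their union is `ℝ≥0`, and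
`μᵢ ∈ gᵢ` for each `i`. -/
theorem pfun_partition (n : ℕ) (μ : Fin (n + 1) → ℝ)
    (h0 : μ 0 = 0) (hmono : StrictMono μ)
    (hfloor : ∀ i j, i ≠ j → ¬ IsIntVal (μ i) → ¬ IsIntVal (μ j) →
      ⌊μ i⌋ ≠ ⌊μ j⌋) :
    (∀ i j, i ≠ j → Pfun n μ i ∩ Pfun n μ j = ∅) ∧
    (⋃ i, Pfun n μ i) = Set.Ici (0 : ℝ) ∧
    (∀ i, μ i ∈ Pfun n μ i) := by
  classical
  have hnonneg : ∀ i, 0 ≤ μ i := fun i => h0 ▸ hmono.monotone (Fin.zero_le i)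
  have hfl : ∀ i, ¬ IsIntVal (μ i) → ((⌊μ i⌋ : ℤ) : ℝ) < μ i := by
    intro i hi
    rcases lt_or_eq_of_le (Int.floor_le (μ i)) with h | h
    · exact h
    · exfalso
      apply hi
      have hge : (0 : ℤ) ≤ ⌊μ i⌋ := Int.floor_nonneg.2 (hnonneg i)
      refine ⟨(⌊μ i⌋).toNat, ?_⟩
      have hc : ((⌊μ i⌋ : ℤ) : ℝ) = ((⌊μ i⌋.toNat : ℕ) : ℝ) := by
        exact_mod_cast (Int.toNat_of_nonneg hge).symm
      exact h.symm.trans hc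
  have hAself : ∀ i, A n μ i (μ i) := by
    intro i
    unfold A
    by_cases ha : IsIntVal (μ i)
    · simp [ha]
    · simp [ha, hfl i ha]
  have hnomem : ∀ (i : Fin (n + 1)) (hi : (i : ℕ) < n),
      ¬ A n μ ⟨(i : ℕ) + 1, by omega⟩ (μ i) := by
    intro i hi
    set j : Fin (n + 1) := ⟨(i : ℕ) + 1, by omega⟩ with hj
    have hij : i ≠ j := by simp [hj, Fin.ext_iff]
    have hab : μ i < μ j := hmono (by simp [hj, Fin.lt_def])
    unfold A
    by_cases hb : IsIntVal (μ j) <;> simp only [hb, if_true, if_false, ite_true, ite_false]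
    · exact not_le.2 hab
    · rw [not_lt]
      by_cases ha : IsIntVal (μ i)
      · obtain ⟨m, hm⟩ := ha
        have : (m : ℤ) ≤ ⌊μ j⌋ := by rw [Int.le_floor]; push_cast; linarith
        calc μ i = ((m : ℤ) : ℝ) := by push_cast; linarith
          _ ≤ _ := by exact_mod_cast this
      · have hle : ⌊μ i⌋ ≤ ⌊μ j⌋ := Int.floor_le_floor hab.le
        have hne : ⌊μ i⌋ ≠ ⌊μ j⌋ := hfloor i j hij ha hb
        have hlt : ⌊μ i⌋ + 1 ≤ ⌊μ j⌋ := by omega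
        have := Int.lt_floor_add_one (μ i)
        have : μ i < ((⌊μ i⌋ + 1 : ℤ) : ℝ) := by push_cast; linarith
        calc μ i ≤ ((⌊μ i⌋ + 1 : ℤ) : ℝ) := this.le
          _ ≤ _ := by exact_mod_cast hlt
  have hmemself : ∀ i, μ i ∈ Pfun n μ i := by
    intro i
    by_cases hi : (i : ℕ) < n
    · exact (mem_pfun_lt i hi (μ i)).2 ⟨hAself i, hnomem i hi⟩
    · exact (mem_pfun_last i hi (μ i)).2 (hAself i)
  refine ⟨?_, ?_, hmemself⟩
  · -- disjointness
    have key : ∀ i j : Fin (n + 1), i < j → Pfun n μ i ∩ Pfun n μ j = ∅ := by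
      intro i j hij
      ext x
      simp only [Set.mem_inter_iff, Set.mem_empty_iff_false, iff_false, not_and]
      intro hxi hxj
      have hi : (i : ℕ) < n := by
        rw [Fin.lt_def] at hij
        have := j.isLt
        omega
      have hAj : A n μ j x := by
        by_cases hjn : (j : ℕ) < n
        · exact ((mem_pfun_lt j hjn x).1 hxj).1
        · exact (mem_pfun_last j hjn x).1 hxj
      have hsle : (⟨(i : ℕ) + 1, by omega⟩ : Fin (n + 1)) ≤ j := by
        rw [Fin.le_def]; rw [Fin.lt_def] at hij; simpa using hij
      have := Amono hmono x j _ hsle hAj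
      exact ((mem_pfun_lt i hi x).1 hxi).2 this
    intro i j hij
    rcases lt_or_gt_of_ne hij with h | h
    · exact key i j h
    · rw [Set.inter_comm]; exact key j i h
  · -- union
    ext x
    simp only [Set.mem_iUnion, Set.mem_Ici]
    constructor
    · rintro ⟨i, hxi⟩
      have hAi : A n μ i x := by
        by_cases hi : (i : ℕ) < n
        · exact ((mem_pfun_lt i hi x).1 hxi).1
        · exact (mem_pfun_last i hi x).1 hxi
      unfold A at hAi
      by_cases ha : IsIntVal (μ i) <;> simp only [ha, ite_true, ite_false] at hAi
      · linarith [hnonneg i]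
      · have : (0 : ℤ) ≤ ⌊μ i⌋ := Int.floor_nonneg.2 (hnonneg i)
        have : ((0 : ℤ) : ℝ) ≤ ((⌊μ i⌋ : ℤ) : ℝ) := by exact_mod_cast this
        push_cast at this
        linarith
    · intro hx
      have hA0 : A n μ 0 x := by
        have h0int : IsIntVal (μ 0) := ⟨0, by simp [h0]⟩
        unfold A
        rw [if_pos h0int, h0]
        exact hx
      have hSne : (Finset.univ.filter (fun i => A n μ i x)).Nonempty := ⟨0, by simp [hA0]⟩
      obtain ⟨i, hiA, hible⟩ : ∃ i, A n μ i x ∧ ∀ j, A n μ j x → j ≤ i := by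
        refine ⟨Finset.max' _ hSne, ?_, ?_⟩
        · have := Finset.max'_mem _ hSne
          simpa using this
        · intro j hj
          exact Finset.le_max' _ j (by simpa using hj)
      by_cases hin : (i : ℕ) < n
      · refine ⟨i, (mem_pfun_lt i hin x).2 ⟨hiA, ?_⟩⟩
        intro hA1
        have := hible _ hA1
        rw [Fin.le_def] at this
        simp at this
      · exact ⟨i, (mem_pfun_last i hin x).2 hiA⟩
end

section
/- Distinguishability lemma: let ω₁, ω₂ be timed words with aligned suffixes e₁, e₂ constructed from suffix e under assumed last resets i₁, i₂. If A is a complete DOTA such that i₁ = k_A(ω₁) and i₂ = k_A(ω₂), and ω₁ and ω₂ reach the same location of A with the same clock value after alignment (i.e., the runs of ω₁ and ω₂ end in the same location), then A accepts ω₁·e₁ if and only if A accepts ω₂·e₂. Contrapositively, if the acceptance results on ω₁·e₁ and ω₂·e₂ differ, then ω₁ and ω₂ reach different locations in A. -/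
/-- A run of a one-clock timed automaton with transition relation `Δ`
(`(q, σ, guard, reset, q') ∈ Δ`) from a state `(q, ν)` over a timed word,
recording the trace of (reset bit, location, clock value) after each step. -/
inductive Run {Q A : Type} (Δ : Set (Q × A × Set ℝ × Bool × Q)) :
    (Q × ℝ) → List (A × ℝ) → List (Bool × Q × ℝ) → Prop
  | nil (s : Q × ℝ) : Run Δ s [] []
  | cons {q : Q} {v : ℝ} {a : A} {t : ℝ} {φ : Set ℝ} {b : Bool} {q' : Q}
      {ω : List (A × ℝ)} {tr : List (Bool × Q × ℝ)} :
      (q, a, φ, b, q') ∈ Δ → 0 ≤ t → v + t ∈ φ →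
      Run Δ (q', if b then 0 else v + t) ω tr →
      Run Δ (q, v) ((a, t) :: ω) ((b, q', if b then 0 else v + t) :: tr)

/-- The state reached at the end of a run with trace `tr` starting from `s`. -/
def endState {Q : Type} (s : Q × ℝ) (tr : List (Bool × Q × ℝ)) : Q × ℝ :=
  match tr.getLast? with
  | some (_, q, v) => (q, v)
  | none => s

/-- The sequence of reset bits of a run trace. -/
def resets {Q : Type} (tr : List (Bool × Q × ℝ)) : List Bool := tr.map (·.1)

/-- `k` is the last reset of a run with reset bits `bs` (1-based indexing):
`k = 0` if no step resets the clock, otherwise `k` is the largest index whose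
step resets the clock. -/
def IsLastReset (bs : List Bool) (k : ℕ) : Prop :=
  k ≤ bs.length ∧ (k = 0 ∨ bs.getD (k - 1) false = true) ∧
    ∀ j, k ≤ j → bs.getD j false = false

/-- `clockVal ω k` is the value of the clock after executing `ω` assuming the
last clock reset occurred at (1-based) position `k`: the sum of the delays
`t_{k+1} + ⋯ + t_n`. -/
def clockVal {A : Type} (ω : List (A × ℝ)) (k : ℕ) : ℝ :=
  ((ω.drop k).map (·.2)).sum

/-- The alignment construction: `align1 ν₁ ν₂ e` is the suffix attached to the
word with clock value `ν₁`, obtained from `e` by adding `ν₂ - ν₁` to the first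
delay when `ν₁ < ν₂`, and leaving `e` unchanged otherwise. -/
noncomputable def align1 {A : Type} (ν₁ ν₂ : ℝ) : List (A × ℝ) → List (A × ℝ)
  | [] => []
  | (a, t) :: rest =>
      if ν₁ < ν₂ then (a, t + (ν₂ - ν₁)) :: rest else (a, t) :: rest

/-- A timed word is accepted iff its run from the initial state ends in an
accepting location. -/
def Accepted {Q A : Type} (Δ : Set (Q × A × Set ℝ × Bool × Q)) (q0 : Q)
    (acc : Set Q) (ω : List (A × ℝ)) : Prop :=
  ∃ tr, Run Δ (q0, 0) ω tr ∧ (endState (q0, 0) tr).1 ∈ acc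

theorem endState_cons {Q : Type} (s : Q × ℝ) (x : Bool × Q × ℝ) (tr : List (Bool × Q × ℝ)) :
    endState s (x :: tr) = endState x.2 tr := by
  cases tr with
  | nil => simp [endState]
  | cons y l =>
    cases h : (y :: l).getLast? with
    | none => simp at h
    | some z => simp [endState, List.getLast?_cons_cons, h]

theorem endState_append {Q : Type} (s : Q × ℝ) (l₁ l₂ : List (Bool × Q × ℝ)) :
    endState s (l₁ ++ l₂) = endState (endState s l₁) l₂ := by
  induction l₁ generalizing s with
  | nil => simp [endState]
  | cons x l ih => rw [List.cons_append, endState_cons, endState_cons, ih]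

theorem Run.append {Q A : Type} {Δ : Set (Q × A × Set ℝ × Bool × Q)}
    {s : Q × ℝ} {ω : List (A × ℝ)} {tr : List (Bool × Q × ℝ)}
    {e : List (A × ℝ)} {tr' : List (Bool × Q × ℝ)}
    (h : Run Δ s ω tr) (h2 : Run Δ (endState s tr) e tr') :
    Run Δ s (ω ++ e) (tr ++ tr') := by
  induction h with
  | nil s => simpa [endState] using h2
  | cons hΔ ht hφ htail ih =>
    rw [endState_cons] at h2
    exact Run.cons hΔ ht hφ (ih h2)

theorem Run.decompose {Q A : Type} {Δ : Set (Q × A × Set ℝ × Bool × Q)} :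
    ∀ {ω : List (A × ℝ)} {s : Q × ℝ} {e : List (A × ℝ)} {tr : List (Bool × Q × ℝ)},
      Run Δ s (ω ++ e) tr →
      ∃ tr₁ tr₂, tr = tr₁ ++ tr₂ ∧ Run Δ s ω tr₁ ∧ Run Δ (endState s tr₁) e tr₂ := by
  intro ω
  induction ω with
  | nil =>
    intro s e tr h
    exact ⟨[], tr, rfl, Run.nil s, by simpa [endState] using h⟩
  | cons x ω ih =>
    intro s e tr h
    obtain ⟨a, t⟩ := x
    obtain ⟨q, v⟩ := s
    rw [List.cons_append] at h
    cases h with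
    | cons hΔ ht hφ htail =>
      obtain ⟨tr₁, tr₂, rfl, hr1, hr2⟩ := ih htail
      exact ⟨_ :: tr₁, tr₂, rfl, Run.cons hΔ ht hφ hr1, by rwa [endState_cons]⟩

theorem Run.delays_nonneg {Q A : Type} {Δ : Set (Q × A × Set ℝ × Bool × Q)}
    {s : Q × ℝ} {ω : List (A × ℝ)} {tr : List (Bool × Q × ℝ)}
    (h : Run Δ s ω tr) : ∀ p ∈ ω, 0 ≤ p.2 := by
  induction h with
  | nil => simp
  | cons hΔ ht hφ htail ih =>
    intro p hp
    rcases List.mem_cons.1 hp with rfl | hp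
    · exact ht
    · exact ih p hp

theorem clockVal_nonneg {A : Type} {ω : List (A × ℝ)} (hpos : ∀ p ∈ ω, 0 ≤ p.2) (k : ℕ) :
    0 ≤ clockVal ω k := by
  apply List.sum_nonneg
  intro x hx
  obtain ⟨p, hp, rfl⟩ := List.mem_map.1 hx
  exact hpos p (List.mem_of_mem_drop hp)

theorem run_unique {Q A : Type} {Δ : Set (Q × A × Set ℝ × Bool × Q)}
    (hc : ∀ (q : Q) (a : A) (v : ℝ), 0 ≤ v →
      ∃! d : Set ℝ × Bool × Q, (q, a, d.1, d.2.1, d.2.2) ∈ Δ ∧ v ∈ d.1) :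
    ∀ {ω : List (A × ℝ)} {q : Q} {v : ℝ} {tr tr' : List (Bool × Q × ℝ)}, 0 ≤ v →
      Run Δ (q, v) ω tr → Run Δ (q, v) ω tr' → tr = tr' := by
  intro ω
  induction ω with
  | nil =>
    intro q v tr tr' _ h h'
    cases h; cases h'; rfl
  | cons x ω ih =>
    intro q v tr tr' hv h h'
    obtain ⟨a, t⟩ := x
    cases h with
    | @cons _ _ _ _ φ b q' _ tl hΔ ht hφ htail =>
      cases h' with
      | @cons _ _ _ _ φ' b' q'' _ tl' hΔ' ht' hφ' htail' =>
        have hvt : (0:ℝ) ≤ v + t := by linarith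
        obtain ⟨d, -, hund⟩ := hc q a (v + t) hvt
        have e1 := hund (φ, b, q') ⟨hΔ, hφ⟩
        have e2 := hund (φ', b', q'') ⟨hΔ', hφ'⟩
        have heq : (φ', b', q'') = (φ, b, q') := e2.trans e1.symm
        rw [Prod.ext_iff, Prod.ext_iff] at heq
        obtain ⟨hφe, hbe, hqe⟩ := heq
        simp only at hφe hbe hqe
        subst hφe; subst hbe; subst hqe
        have htleq : tl = tl' := by
          refine ih ?_ htail htail'
          split <;> linarith
        rw [htleq]

theorem run_shift {Q A : Type} {Δ : Set (Q × A × Set ℝ × Bool × Q)}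
    {q : Q} {u u' s s' : ℝ} {a : A} {rest : List (A × ℝ)} {tr : List (Bool × Q × ℝ)}
    (hss : u + s = u' + s') (hs' : 0 ≤ s')
    (h : Run Δ (q, u) ((a, s) :: rest) tr) : Run Δ (q, u') ((a, s') :: rest) tr := by
  cases h with
  | cons hΔ ht hφ htail =>
    rw [hss] at hφ htail ⊢
    exact Run.cons hΔ hs' hφ htail

theorem run_clock {Q A : Type} {Δ : Set (Q × A × Set ℝ × Bool × Q)} :
    ∀ {ω : List (A × ℝ)} {q : Q} {v : ℝ} {tr : List (Bool × Q × ℝ)} {k : ℕ},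
      Run Δ (q, v) ω tr → IsLastReset (resets tr) k →
      (endState (q, v) tr).2 = (if k = 0 then v else 0) + clockVal ω k := by
  intro ω
  induction ω with
  | nil =>
    intro q v tr k h hk
    cases h
    have hk0 : k = 0 := Nat.le_zero.1 (by simpa [resets] using hk.1)
    subst hk0
    simp [endState, clockVal]
  | cons x ω ih =>
    intro q v tr k h hk
    obtain ⟨a, t⟩ := x
    cases h with
    | @cons _ _ _ _ φ b q' _ tl hΔ ht hφ htail =>
      rw [endState_cons]
      obtain ⟨hk1, hk2, hk3⟩ := hk
      simp only [resets, List.map_cons] at hk1 hk2 hk3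
      match k with
      | 0 =>
        have hb : b = false := by simpa using hk3 0 (le_refl 0)
        have hk' : IsLastReset (resets tl) 0 :=
          ⟨Nat.zero_le _, Or.inl rfl, fun j _ => by
            simpa [resets] using hk3 (j+1) (by omega)⟩
        have hih := ih htail hk'
        subst hb
        rw [hih]
        simp [clockVal]
        ring
      | (j+1) =>
        have hj1 : j ≤ (resets tl).length := by
          simpa [resets] using Nat.succ_le_succ_iff.1 (by simpa using hk1)
        have hk2' : j = 0 ∨ (resets tl).getD (j-1) false = true := by
          match j with
          | 0 => exact Or.inl rfl
          | (m+1) =>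
            right
            have := hk2.resolve_left (by simp)
            simpa [resets] using this
        have hk3' : ∀ j', j ≤ j' → (resets tl).getD j' false = false := fun j' hj' => by
          simpa [resets] using hk3 (j'+1) (by omega)
        have hih := ih htail ⟨hj1, hk2', hk3'⟩
        rw [hih]
        have hz : (if j = 0 then (if b then 0 else v + t) else (0:ℝ)) = 0 := by
          match j with
          | 0 =>
            have hb : b = true := by
              have := hk2.resolve_left (by simp)
              simpa using this
            simp [hb]
          | (m+1) => simp
        rw [hz]
        have hcv : clockVal ((a, t) :: ω) (j+1) = clockVal ω j := by
          simp [clockVal]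
        rw [hcv]
        simp

theorem aux_dir {Q A : Type}
    (Δ : Set (Q × A × Set ℝ × Bool × Q)) (q0 : Q) (acc : Set Q)
    (hc : ∀ (q : Q) (a : A) (v : ℝ), 0 ≤ v →
      ∃! d : Set ℝ × Bool × Q, (q, a, d.1, d.2.1, d.2.2) ∈ Δ ∧ v ∈ d.1)
    (qf : Q) (v₁ v₂ : ℝ) (hv₁ : 0 ≤ v₁) (hv₂ : 0 ≤ v₂)
    (ω₁ ω₂ : List (A × ℝ)) (tr₁ tr₂ : List (Bool × Q × ℝ))
    (h1 : Run Δ (q0, 0) ω₁ tr₁) (h2 : Run Δ (q0, 0) ω₂ tr₂)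
    (hend1 : endState (q0, 0) tr₁ = (qf, v₁))
    (hend2 : endState (q0, 0) tr₂ = (qf, v₂))
    (a : A) (t : ℝ) (ht : 0 ≤ t) (rest : List (A × ℝ))
    (hacc : Accepted Δ q0 acc (ω₁ ++ align1 v₁ v₂ ((a, t) :: rest))) :
    Accepted Δ q0 acc (ω₂ ++ align1 v₂ v₁ ((a, t) :: rest)) := by
  obtain ⟨tr, hrun, hmem⟩ := hacc
  obtain ⟨s₁, s₂, rfl, hr1, hr2⟩ := Run.decompose hrun
  have hs₁ : s₁ = tr₁ := run_unique hc le_rfl hr1 h1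
  subst hs₁
  rw [hend1] at hr2
  have ha1 : align1 v₁ v₂ ((a, t) :: rest)
      = (a, if v₁ < v₂ then t + (v₂ - v₁) else t) :: rest := by
    simp only [align1]; split <;> simp
  have ha2 : align1 v₂ v₁ ((a, t) :: rest)
      = (a, if v₂ < v₁ then t + (v₁ - v₂) else t) :: rest := by
    simp only [align1]; split <;> simp
  have key : v₁ + (if v₁ < v₂ then t + (v₂ - v₁) else t)
      = v₂ + (if v₂ < v₁ then t + (v₁ - v₂) else t) ∧
      (0 ≤ (if v₂ < v₁ then t + (v₁ - v₂) else t)) := by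
    rcases lt_trichotomy v₁ v₂ with h | h | h
    · rw [if_pos h, if_neg (not_lt.2 (le_of_lt h))]
      constructor <;> linarith
    · subst h
      simp [lt_irrefl, ht]
    · rw [if_neg (not_lt.2 (le_of_lt h)), if_pos h]
      constructor <;> linarith
  rw [ha1] at hr2
  have hr2' : Run Δ (qf, v₂) ((a, if v₂ < v₁ then t + (v₁ - v₂) else t) :: rest) s₂ :=
    run_shift key.1 key.2 hr2
  refine ⟨tr₂ ++ s₂, Run.append h2 (by rw [hend2, ha2]; exact hr2'), ?_⟩
  cases hr2' with
  | cons hΔ ht' hφ htail =>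
    rw [endState_append, hend1, endState_cons] at hmem
    rw [endState_append, hend2, endState_cons]
    exact hmem

/-- Distinguishability lemma: let `ω₁, ω₂` be timed words whose runs on a
complete DOTA `A` have last resets `i₁, i₂` and end in the same location.
Then `A` accepts `ω₁·e₁` iff it accepts `ω₂·e₂`, where `e₁, e₂` are the
aligned suffixes built from `e` using the clock values `ν_c(ω₁,i₁)` and
`ν_c(ω₂,i₂)`.  (Contrapositively, differing acceptance results imply the two
words reach different locations.) -/
theorem distinguishability {Q A : Type}
    (Δ : Set (Q × A × Set ℝ × Bool × Q)) (q0 : Q) (acc : Set Q)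
    (hcomplete : ∀ (q : Q) (a : A) (v : ℝ), 0 ≤ v →
      ∃! d : Set ℝ × Bool × Q, (q, a, d.1, d.2.1, d.2.2) ∈ Δ ∧ v ∈ d.1)
    (ω₁ ω₂ : List (A × ℝ)) (tr₁ tr₂ : List (Bool × Q × ℝ))
    (h1 : Run Δ (q0, 0) ω₁ tr₁) (h2 : Run Δ (q0, 0) ω₂ tr₂)
    (i₁ i₂ : ℕ)
    (hi₁ : IsLastReset (resets tr₁) i₁) (hi₂ : IsLastReset (resets tr₂) i₂)
    (hloc : (endState (q0, 0) tr₁).1 = (endState (q0, 0) tr₂).1)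
    (e : List (A × ℝ)) (he : e ≠ []) (hepos : ∀ p ∈ e, 0 ≤ p.2) :
    (Accepted Δ q0 acc (ω₁ ++ align1 (clockVal ω₁ i₁) (clockVal ω₂ i₂) e) ↔
      Accepted Δ q0 acc (ω₂ ++ align1 (clockVal ω₂ i₂) (clockVal ω₁ i₁) e)) := by
  have hval1 : (endState (q0, 0) tr₁).2 = clockVal ω₁ i₁ := by
    rw [run_clock h1 hi₁]; split <;> ring
  have hval2 : (endState (q0, 0) tr₂).2 = clockVal ω₂ i₂ := by
    rw [run_clock h2 hi₂]; split <;> ring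
  have hend1 : endState (q0, 0) tr₁ = ((endState (q0, 0) tr₁).1, clockVal ω₁ i₁) := by
    rw [← hval1]
  have hend2 : endState (q0, 0) tr₂ = ((endState (q0, 0) tr₁).1, clockVal ω₂ i₂) := by
    rw [hloc, ← hval2]
  have hv₁ : 0 ≤ clockVal ω₁ i₁ := clockVal_nonneg (Run.delays_nonneg h1) i₁
  have hv₂ : 0 ≤ clockVal ω₂ i₂ := clockVal_nonneg (Run.delays_nonneg h2) i₂
  obtain ⟨⟨a, t⟩, rest, rfl⟩ := List.exists_cons_of_ne_nil he
  have ht : 0 ≤ t := hepos (a, t) (by simp)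
  constructor
  · exact aux_dir Δ q0 acc hcomplete _ _ _ hv₁ hv₂ ω₁ ω₂ tr₁ tr₂ h1 h2 hend1 hend2 a t ht rest
  · exact aux_dir Δ q0 acc hcomplete _ _ _ hv₂ hv₁ ω₂ ω₁ tr₂ tr₁ h2 h1 hend2 hend1 a t ht rest
end

section
/- Characterization of valid last-reset combinations: for timed words ω₁, ω₂ with longest common prefix of length m, the set C(ω₁,ω₂) = {(i₁,i₂) : 0 ≤ i₁ ≤ |ω₁|, 0 ≤ i₂ ≤ |ω₂|, and (i₁ ≤ m ∧ i₂ ≤ m → i₁ = i₂)} contains the pair (k_A(ω₁), k_A(ω₂)) for every complete DOTA A. That is, the true last resets of ω₁ and ω₂ in any complete DOTA always form a valid combination. -/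
lemma run_length {Q A : Type} {Δ : Set (Q × A × Set ℝ × Bool × Q)}
    {s : Q × ℝ} {ω : List (A × ℝ)} {tr : List (Bool × Q × ℝ)}
    (h : Run Δ s ω tr) : tr.length = ω.length := by
  induction h with
  | nil => rfl
  | cons _ _ _ _ ih => simp [ih]

lemma run_det_take {Q A : Type} {Δ : Set (Q × A × Set ℝ × Bool × Q)}
    (hcomplete : ∀ (q : Q) (a : A) (v : ℝ), 0 ≤ v →
      ∃! d : Set ℝ × Bool × Q, (q, a, d.1, d.2.1, d.2.2) ∈ Δ ∧ v ∈ d.1) :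
    ∀ (m : ℕ) (q : Q) (v : ℝ), 0 ≤ v → ∀ ω₁ ω₂ tr₁ tr₂,
      Run Δ (q, v) ω₁ tr₁ → Run Δ (q, v) ω₂ tr₂ →
      ω₁.take m = ω₂.take m → tr₁.take m = tr₂.take m := by
  intro m
  induction m with
  | zero => simp
  | succ m ih =>
    intro q v hv ω₁ ω₂ tr₁ tr₂ h1 h2 htake
    cases h1 with
    | nil =>
      cases h2 with
      | nil => rfl
      | cons _ _ _ _ => simp at htake
    | cons hΔ1 ht1 hφ1 hrun1 =>
      rename_i a t φ₁ b₁ q₁' ω₁' tr₁'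
      cases h2 with
      | nil => simp at htake
      | cons hΔ2 ht2 hφ2 hrun2 =>
        rename_i a₂ t₂ φ₂ b₂ q₂' ω₂' tr₂'
        simp only [List.take_succ_cons, List.cons.injEq, Prod.mk.injEq] at htake
        obtain ⟨⟨ha, hti⟩, htail⟩ := htake
        subst ha; subst hti
        obtain ⟨d, _, huniq⟩ := hcomplete q a (v + t) (by linarith)
        have e1 := huniq (φ₁, b₁, q₁') ⟨hΔ1, hφ1⟩
        have e2 := huniq (φ₂, b₂, q₂') ⟨hΔ2, hφ2⟩
        have e : (φ₁, b₁, q₁') = (φ₂, b₂, q₂') := e1.trans e2.symm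
        obtain ⟨hφ, hb, hq⟩ : φ₁ = φ₂ ∧ b₁ = b₂ ∧ q₁' = q₂' := by
          simpa [Prod.ext_iff] using e
        subst hφ; subst hb; subst hq
        have hv' : (0:ℝ) ≤ if b₁ then 0 else v + t := by
          split <;> linarith
        have := ih q₁' _ hv' ω₁' ω₂' tr₁' tr₂' hrun1 hrun2 htail
        simp [this]

/-- The true last resets always form a valid last-reset combination: for timed
words `ω₁, ω₂` whose longest common prefix has length `m`, and any complete
DOTA `A`, the pair `(k_A(ω₁), k_A(ω₂))` lies in `C(ω₁,ω₂)`, i.e.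
`k_A(ω₁) ≤ |ω₁|`, `k_A(ω₂) ≤ |ω₂|`, and if both are `≤ m` then they are
equal. -/
theorem true_resets_valid_combination {Q A : Type}
    (Δ : Set (Q × A × Set ℝ × Bool × Q)) (q0 : Q)
    (hcomplete : ∀ (q : Q) (a : A) (v : ℝ), 0 ≤ v →
      ∃! d : Set ℝ × Bool × Q, (q, a, d.1, d.2.1, d.2.2) ∈ Δ ∧ v ∈ d.1)
    (ω₁ ω₂ : List (A × ℝ)) (tr₁ tr₂ : List (Bool × Q × ℝ))
    (h1 : Run Δ (q0, 0) ω₁ tr₁) (h2 : Run Δ (q0, 0) ω₂ tr₂)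
    (m : ℕ) (hm₁ : m ≤ ω₁.length) (hm₂ : m ≤ ω₂.length)
    (htake : ω₁.take m = ω₂.take m)
    (hmax : m < ω₁.length → m < ω₂.length → ω₁[m]? ≠ ω₂[m]?)
    (k₁ k₂ : ℕ)
    (hk₁ : IsLastReset (resets tr₁) k₁) (hk₂ : IsLastReset (resets tr₂) k₂) :
    k₁ ≤ ω₁.length ∧ k₂ ≤ ω₂.length ∧ (k₁ ≤ m → k₂ ≤ m → k₁ = k₂) := by
  have hl₁ : tr₁.length = ω₁.length := run_length h1
  have hl₂ : tr₂.length = ω₂.length := run_length h2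
  have hres1 : (resets tr₁).length = ω₁.length := by simp [resets, hl₁]
  have hres2 : (resets tr₂).length = ω₂.length := by simp [resets, hl₂]
  refine ⟨hres1 ▸ hk₁.1, hres2 ▸ hk₂.1, ?_⟩
  intro hkm₁ hkm₂
  have htr := run_det_take hcomplete m q0 0 le_rfl ω₁ ω₂ tr₁ tr₂ h1 h2 htake
  have hres : ∀ j, j < m → (resets tr₁).getD j false = (resets tr₂).getD j false := by
    intro j hj
    have hmt : (resets tr₁).take m = (resets tr₂).take m := by
      simp only [resets, ← List.map_take, htr]
    have hj' := congrArg (fun l => l[j]?) hmt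
    simp only [List.getElem?_take, hj, if_pos] at hj'
    simp [List.getD_eq_getElem?_getD, hj']
  rcases lt_trichotomy k₁ k₂ with h | h | h
  · exfalso
    have hne : k₂ ≠ 0 := by omega
    have htrue : (resets tr₂).getD (k₂ - 1) false = true := hk₂.2.1.resolve_left hne
    have hfalse : (resets tr₁).getD (k₂ - 1) false = false := hk₁.2.2 (k₂ - 1) (by omega)
    rw [hres (k₂ - 1) (by omega), htrue] at hfalse
    exact Bool.noConfusion hfalse
  · exact h
  · exfalso
    have hne : k₁ ≠ 0 := by omega
    have htrue : (resets tr₁).getD (k₁ - 1) false = true := hk₁.2.1.resolve_left hne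
    have hfalse : (resets tr₂).getD (k₁ - 1) false = false := hk₂.2.2 (k₁ - 1) (by omega)
    rw [← hres (k₁ - 1) (by omega), htrue] at hfalse
    exact Bool.noConfusion hfalse
end

section
/- Soundness of Constraint C₂ (consistency): let A be a complete DOTA, and ω₁, ω₂ timed words whose runs in A end at the same location, with last resets i = k_A(ω₁) and j = k_A(ω₂). Let ω₁' = ω₁·(σ,t₁) and ω₂' = ω₂·(σ,t₂), and suppose the clock values ν_c(ω₁,i)+t₁ and ν_c(ω₂,j)+t₂ lie in the same region (with respect to the maximum constant of A). Then the transitions taken by the last actions of ω₁' and ω₂' in A are identical; in particular the reset bits are equal and ω₁' and ω₂' reach the same location. -/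
/-- The regions of a one-clock timed automaton with maximum constant `κ`. -/
def Regions (κ : ℕ) : Set (Set ℝ) :=
  {r | (∃ n : ℕ, n ≤ κ ∧ r = Set.Icc (n : ℝ) n) ∨
       (∃ n : ℕ, n < κ ∧ r = Set.Ioo (n : ℝ) ((n : ℝ) + 1)) ∨
       r = Set.Ioi (κ : ℝ)}

/-- Two clock values lie in the same region (w.r.t. maximum constant `κ`). -/
def SameRegion (κ : ℕ) (x y : ℝ) : Prop :=
  ∃ r ∈ Regions κ, x ∈ r ∧ y ∈ r

/-- `φ` is an integer-bounded interval guard with endpoints natural numbers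
bounded by `κ`, or with `∞` as right endpoint. -/
def IntervalGuard (κ : ℕ) (φ : Set ℝ) : Prop :=
  ∃ lo : ℕ, lo ≤ κ ∧
    ((∃ hi : ℕ, hi ≤ κ ∧
        (φ = Set.Icc (lo : ℝ) hi ∨ φ = Set.Ico (lo : ℝ) hi ∨
         φ = Set.Ioc (lo : ℝ) hi ∨ φ = Set.Ioo (lo : ℝ) hi)) ∨
     φ = Set.Ici (lo : ℝ) ∨ φ = Set.Ioi (lo : ℝ))

lemma region_nonneg {κ : ℕ} {r : Set ℝ} (hr : r ∈ Regions κ) {y : ℝ} (hy : y ∈ r) :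
    0 ≤ y := by
  rcases hr with ⟨n, hn, rfl⟩ | ⟨n, hn, rfl⟩ | rfl
  · exact le_trans (Nat.cast_nonneg n) hy.1
  · exact le_trans (Nat.cast_nonneg n) hy.1.le
  · exact le_trans (Nat.cast_nonneg κ) (le_of_lt hy)

lemma guard_region {κ : ℕ} {φ : Set ℝ} (hφ : IntervalGuard κ φ) {x y : ℝ}
    (hreg : SameRegion κ x y) (hx : x ∈ φ) : y ∈ φ := by
  obtain ⟨r, hr, hxr, hyr⟩ := hreg
  obtain ⟨lo, hlo, hcases⟩ := hφ
  rcases hr with ⟨n, hn, rfl⟩ | ⟨n, hn, rfl⟩ | rfl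
  · -- point region: x = y
    have hx' : x = (n : ℝ) := le_antisymm hxr.2 hxr.1
    have hy' : y = (n : ℝ) := le_antisymm hyr.2 hyr.1
    rwa [hy', ← hx']
  · -- open unit interval (n, n+1)
    obtain ⟨hx1, hx2⟩ := hxr
    obtain ⟨hy1, hy2⟩ := hyr
    -- from guard membership get bounds on x
    have key : ∀ hi : ℕ, x ≤ (hi : ℝ) → y < (hi : ℝ) := by
      intro hi hxhi
      have : (n : ℝ) < hi := lt_of_lt_of_le hx1 hxhi
      have : n < hi := by exact_mod_cast this
      have : ((n : ℝ)) + 1 ≤ hi := by exact_mod_cast this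
      linarith
    have keylo : (lo : ℝ) ≤ x → (lo : ℝ) < y := by
      intro hlox
      have : (lo : ℝ) < (n : ℝ) + 1 := lt_of_le_of_lt hlox hx2
      have : lo < n + 1 := by exact_mod_cast this
      have : lo ≤ n := Nat.lt_succ_iff.mp this
      have : (lo : ℝ) ≤ n := by exact_mod_cast this
      linarith
    rcases hcases with ⟨hi, hhi, h | h | h | h⟩ | h | h <;> subst h
    · exact ⟨(keylo hx.1).le, (key hi hx.2).le⟩
    · exact ⟨(keylo hx.1).le, key hi hx.2.le⟩
    · exact ⟨keylo hx.1.le, (key hi hx.2).le⟩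
    · exact ⟨keylo hx.1.le, key hi hx.2.le⟩
    · exact (keylo hx).le
    · exact keylo hx.le
  · -- unbounded region (κ, ∞)
    have hloy : (lo : ℝ) < y := lt_of_le_of_lt (by exact_mod_cast hlo) hyr
    rcases hcases with ⟨hi, hhi, h | h | h | h⟩ | h | h <;> subst h
    · exact absurd hx.2 (by push_neg; exact lt_of_le_of_lt (by exact_mod_cast hhi) hxr)
    · exact absurd hx.2.le (by push_neg; exact lt_of_le_of_lt (by exact_mod_cast hhi) hxr)
    · exact absurd hx.2 (by push_neg; exact lt_of_le_of_lt (by exact_mod_cast hhi) hxr)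
    · exact absurd hx.2.le (by push_neg; exact lt_of_le_of_lt (by exact_mod_cast hhi) hxr)
    · exact hloy.le
    · exact hloy

/-- Soundness of Constraint C₂ (consistency): let `A` be a complete DOTA whose
guards are integer-bounded intervals with maximum constant `κ`, and let
`ω₁, ω₂` be timed words whose runs end in the same location, with last resets
`i, j`.  If the clock values `ν_c(ω₁,i) + t₁` and `ν_c(ω₂,j) + t₂` lie in the
same region, then the transitions taken by the last actions of
`ω₁·(σ,t₁)` and `ω₂·(σ,t₂)` are identical: same guard, same reset bit and same
target location. -/
theorem constraint_C2_sound {Q A : Type}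
    (Δ : Set (Q × A × Set ℝ × Bool × Q)) (q0 : Q) (κ : ℕ)
    (hdet : ∀ q a φ b q' φ' b' q'',
      (q, a, φ, b, q') ∈ Δ → (q, a, φ', b', q'') ∈ Δ →
      (φ, b, q') ≠ (φ', b', q'') → φ ∩ φ' ∩ Set.Ici (0 : ℝ) = ∅)
    (hguards : ∀ q a φ b q', (q, a, φ, b, q') ∈ Δ → IntervalGuard κ φ)
    (ω₁ ω₂ : List (A × ℝ)) (tr₁ tr₂ : List (Bool × Q × ℝ))
    (h1 : Run Δ (q0, 0) ω₁ tr₁) (h2 : Run Δ (q0, 0) ω₂ tr₂)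
    (hloc : (endState (q0, 0) tr₁).1 = (endState (q0, 0) tr₂).1)
    (i j : ℕ)
    (hi : IsLastReset (resets tr₁) i) (hj : IsLastReset (resets tr₂) j)
    (σ : A) (t₁ t₂ : ℝ) (ht₁ : 0 ≤ t₁) (ht₂ : 0 ≤ t₂)
    (hreg : SameRegion κ (clockVal ω₁ i + t₁) (clockVal ω₂ j + t₂)) :
    ∀ φ₁ b₁ q₁' φ₂ b₂ q₂',
      ((endState (q0, 0) tr₁).1, σ, φ₁, b₁, q₁') ∈ Δ →
      clockVal ω₁ i + t₁ ∈ φ₁ →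
      ((endState (q0, 0) tr₂).1, σ, φ₂, b₂, q₂') ∈ Δ →
      clockVal ω₂ j + t₂ ∈ φ₂ →
      (φ₁, b₁, q₁') = (φ₂, b₂, q₂') := by
  intro φ₁ b₁ q₁' φ₂ b₂ q₂' hΔ1 hm1 hΔ2 hm2
  by_contra hne
  rw [hloc] at hΔ1
  have hempty := hdet _ _ _ _ _ _ _ _ hΔ1 hΔ2 hne
  have hy : clockVal ω₂ j + t₂ ∈ φ₁ :=
    guard_region (hguards _ _ _ _ _ hΔ1) hreg hm1
  obtain ⟨r, hr, _, hyr⟩ := hreg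
  have hy0 : (0 : ℝ) ≤ clockVal ω₂ j + t₂ := region_nonneg hr hyr
  have : clockVal ω₂ j + t₂ ∈ φ₁ ∩ φ₂ ∩ Set.Ici (0 : ℝ) := ⟨⟨hy, hm2⟩, hy0⟩
  rw [hempty] at this
  exact this
end

section
/- Guards respect regions: any clock constraint φ of the form of a conjunction of comparisons c ⋈ m with integer constants m ≤ κ (equivalently, an integer-bounded interval with endpoints in ℕ ∪ {∞} bounded by κ), either contains a given region entirely or is disjoint from it. That is, for every region r of the region partition with maximum constant κ and every such guard φ, either r ⊆ φ or r ∩ φ = ∅. -/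
lemma region_key (κ : ℕ) (r : Set ℝ) (hr : r ∈ Regions κ) (n : ℕ) (hn : n ≤ κ)
    {x y : ℝ} (hx : x ∈ r) (hy : y ∈ r) :
    ((n : ℝ) ≤ x ↔ (n : ℝ) ≤ y) ∧ ((n : ℝ) < x ↔ (n : ℝ) < y) := by
  rcases hr with ⟨m, hm, rfl⟩ | ⟨m, hm, rfl⟩ | rfl
  · simp only [Set.mem_Icc] at hx hy
    have hxy : x = y := by linarith [hx.1, hx.2, hy.1, hy.2]
    rw [hxy]; exact ⟨Iff.rfl, Iff.rfl⟩
  · simp only [Set.mem_Ioo] at hx hy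
    have key : ∀ z : ℝ, z ∈ Set.Ioo (m : ℝ) (m + 1) →
        (((n : ℝ) ≤ z ↔ n ≤ m) ∧ ((n : ℝ) < z ↔ n ≤ m)) := by
      intro z hz
      simp only [Set.mem_Ioo] at hz
      constructor
      · constructor
        · intro h
          by_contra hc
          push_neg at hc
          have : (m : ℝ) + 1 ≤ n := by exact_mod_cast hc
          linarith [hz.2]
        · intro h
          have : (n : ℝ) ≤ m := by exact_mod_cast h
          linarith [hz.1]
      · constructor
        · intro h
          by_contra hc
          push_neg at hc
          have : (m : ℝ) + 1 ≤ n := by exact_mod_cast hc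
          linarith [hz.2]
        · intro h
          have : (n : ℝ) ≤ m := by exact_mod_cast h
          linarith [hz.1]
    obtain ⟨kx1, kx2⟩ := key x (Set.mem_Ioo.mpr hx)
    obtain ⟨ky1, ky2⟩ := key y (Set.mem_Ioo.mpr hy)
    rw [kx1, kx2, ky1, ky2]; exact ⟨Iff.rfl, Iff.rfl⟩
  · simp only [Set.mem_Ioi] at hx hy
    have hnκ : (n : ℝ) ≤ κ := by exact_mod_cast hn
    constructor <;> constructor <;> intro _ <;> linarith

/-- Guards respect regions: an integer-bounded interval guard (endpoints
natural numbers `≤ κ` or `∞`) either contains a region entirely or is disjoint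
from it. -/
theorem guard_respects_regions (κ : ℕ) (r φ : Set ℝ)
    (hr : r ∈ Regions κ) (hφ : IntervalGuard κ φ) :
    r ⊆ φ ∨ r ∩ φ = ∅ := by
  classical
  by_cases h : r ∩ φ = ∅
  · exact Or.inr h
  left
  obtain ⟨x, hxr, hxφ⟩ := Set.nonempty_iff_ne_empty.2 h
  intro y hyr
  obtain ⟨lo, hlo, hcase⟩ := hφ
  have klo := region_key κ r hr lo hlo hxr hyr
  rcases hcase with ⟨hi, hhi, hint⟩ | hφ' | hφ'
  · have khi := region_key κ r hr hi hhi hxr hyr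
    rcases hint with rfl | rfl | rfl | rfl <;>
      simp only [Set.mem_Icc, Set.mem_Ico, Set.mem_Ioc, Set.mem_Ioo] at hxφ ⊢ <;>
      refine ⟨?_, ?_⟩ <;>
      first
        | exact klo.1.mp hxφ.1
        | exact klo.2.mp hxφ.1
        | · have h2 := hxφ.2
            by_contra hc
            push_neg at hc
            first
              | exact absurd (khi.2.mpr hc) (not_lt.mpr h2)
              | exact absurd (khi.1.mpr hc) (not_le.mpr h2)
  · rcases hφ' with rfl
    exact klo.1.mp hxφ
  · rcases hφ' with rfl
    exact klo.2.mp hxφ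
end
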